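/- Let H ≤ π₁^s(X,x₀). If X is locally path connected and a strong H-SLT space at x₀, then π₁^s(X,x₀) equals the Spanier group π₁^{sp}(X,x₀). -/

import Mathlib

open CategoryTheory unitInterval
open scoped Topology

attribute [local instance] Path.Homotopic.setoid

noncomputable section

/-- The homotopy class of a loop as an element of the fundamental group. -/
def loopClass {X : Type*} [TopologicalSpace X] {x : X} (γ : Path x x) :
    FundamentalGroup X x :=
  FundamentalGroup.fromPath
    (⟦γ⟧ : Path.Homotopic.Quotient x x)

variable {X : Type*} [TopologicalSpace X]

/-- The Spanier group of a family of subsets of `X`, based at `x`: the subgroup generated by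
classes `[α∗β∗α⁻¹]` where `α` is a path from `x` and `β` is a loop inside a member of `𝒰`. -/
def spanierGroupAt (x : X) (𝒰 : Set (Set X)) : Subgroup (FundamentalGroup X x) :=
  Subgroup.closure {g | ∃ (y : X) (α : Path x y) (β : Path y y) (U : Set X),
    U ∈ 𝒰 ∧ (∀ t, β t ∈ U) ∧ g = loopClass (α.trans (β.trans α.symm))}

/-- `𝒰` is an open cover of `X`. -/
def IsOpenCover (𝒰 : Set (Set X)) : Prop := (∀ U ∈ 𝒰, IsOpen U) ∧ ⋃₀ 𝒰 = Set.univ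

/-- `X` is a strong `H`-SLT space at `x₀`: for every `x ∈ X` and every open neighborhood `U`
of `x₀` there is an open neighborhood `V` of `x` such that for every loop `β` in `V` based at
`x` and every path `α` from `x₀` to `x` there is a loop `λ` in `U` based at `x₀` with
`[α∗β∗α⁻¹∗λ⁻¹] ∈ H`. -/
def StrongHSLTAt (x₀ : X) (H : Subgroup (FundamentalGroup X x₀)) : Prop :=
  ∀ (x : X) (U : Set X), IsOpen U → x₀ ∈ U →
    ∃ V : Set X, IsOpen V ∧ x ∈ V ∧
      ∀ (β : Path x x), (∀ t, β t ∈ V) → ∀ (α : Path x₀ x),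
        ∃ lam : Path x₀ x₀, (∀ t, lam t ∈ U) ∧
          loopClass (α.trans (β.trans α.symm)) * (loopClass lam)⁻¹ ∈ H

/-- The set of classes of small loops at `x₀`: loops that, for every open neighborhood `U`
of `x₀`, are homotopic (rel endpoints) to a loop inside `U`. -/
def smallLoopSet (x₀ : X) : Set (FundamentalGroup X x₀) :=
  {g | ∀ U : Set X, IsOpen U → x₀ ∈ U →
    ∃ γ : Path x₀ x₀, (∀ t, γ t ∈ U) ∧ loopClass γ = g}

/-- A path open cover: a choice, for each path `α` from `x₀`, of an open neighborhood
of its endpoint `α(1)`. -/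
def IsPathOpenCover (x₀ : X) (V : (Σ y : X, Path x₀ y) → Set X) : Prop :=
  ∀ a, IsOpen (V a) ∧ a.1 ∈ V a

/-- The path Spanier subgroup `π̃(𝒱, x₀)`, generated by `[α∗β∗α⁻¹]` with `β` a loop
in `V_α`. -/
def pathSpanierSub (x₀ : X) (V : (Σ y : X, Path x₀ y) → Set X) :
    Subgroup (FundamentalGroup X x₀) :=
  Subgroup.closure {g | ∃ (y : X) (α : Path x₀ y) (β : Path y y),
    (∀ t, β t ∈ V ⟨y, α⟩) ∧ g = loopClass (α.trans (β.trans α.symm))}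

/-- The path Spanier group `π̃₁^{sp}(X, x₀)`: the intersection of all path Spanier
subgroups over path open covers. -/
def pathSpanierWhole (x₀ : X) : Subgroup (FundamentalGroup X x₀) :=
  ⨅ (V : (Σ y : X, Path x₀ y) → Set X) (_ : IsPathOpenCover x₀ V), pathSpanierSub x₀ V

/-- The Spanier group `π₁^{sp}(X, x₀)`: the intersection of the Spanier subgroups over all
open covers of `X`. -/
def spanierWhole (x₀ : X) : Subgroup (FundamentalGroup X x₀) :=
  ⨅ (𝒰 : Set (Set X)) (_ : IsOpenCover 𝒰), spanierGroupAt x₀ 𝒰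

section Aux

variable {x₀ : X}

lemma loopClass_hom {x : X} (γ : Path x x) :
    (loopClass γ : Path.Homotopic.Quotient x x) = (⟦γ⟧ : Path.Homotopic.Quotient x x) := rfl

lemma loopClass_trans {x : X} (γ γ' : Path x x) :
    loopClass (γ.trans γ') = loopClass γ' * loopClass γ :=
  rfl

lemma loopClass_symm {x : X} (γ : Path x x) : loopClass γ.symm = (loopClass γ)⁻¹ :=
  rfl

lemma loopClass_refl (x : X) : loopClass (Path.refl x) = 1 :=
  rfl

lemma groupoid_refl {x : X} (b : FundamentalGroupoid.mk x ⟶ FundamentalGroupoid.mk x) :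
    𝟙 (FundamentalGroupoid.mk x) ≫ (b ≫ Groupoid.inv (𝟙 (FundamentalGroupoid.mk x))) = b := by
  simp [Groupoid.inv_eq_inv]

lemma loopClass_refl_conj {x : X} (γ : Path x x) :
    loopClass ((Path.refl x).trans (γ.trans (Path.refl x).symm)) = loopClass γ :=
  (groupoid_refl (⟦γ⟧ : Path.Homotopic.Quotient x x))

lemma groupoid_conj {x₀ x y : X}
    (a : FundamentalGroupoid.mk x₀ ⟶ FundamentalGroupoid.mk y)
    (d : FundamentalGroupoid.mk x ⟶ FundamentalGroupoid.mk y)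
    (b : FundamentalGroupoid.mk y ⟶ FundamentalGroupoid.mk y) :
    (a ≫ Groupoid.inv d) ≫ ((d ≫ (b ≫ Groupoid.inv d)) ≫ Groupoid.inv (a ≫ Groupoid.inv d)) =
      a ≫ (b ≫ Groupoid.inv a) := by
  simp [Groupoid.inv_eq_inv]

lemma loopClass_conj {x₀ x y : X} (α : Path x₀ y) (δ : Path x y) (β : Path y y) :
    loopClass ((α.trans δ.symm).trans
        ((δ.trans (β.trans δ.symm)).trans (α.trans δ.symm).symm)) =
      loopClass (α.trans (β.trans α.symm)) :=
  (groupoid_conj (⟦α⟧ : Path.Homotopic.Quotient x₀ y)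
    (⟦δ⟧ : Path.Homotopic.Quotient x y) (⟦β⟧ : Path.Homotopic.Quotient y y))

lemma trans_mem {U : Set X} {a b c : X} {p : Path a b} {q : Path b c}
    (hp : ∀ t, p t ∈ U) (hq : ∀ t, q t ∈ U) : ∀ t, p.trans q t ∈ U := by
  intro t
  have h : p.trans q t ∈ Set.range (p.trans q) := Set.mem_range_self t
  rw [Path.trans_range] at h
  rcases h with ⟨s, hs⟩ | ⟨s, hs⟩
  · rw [← hs]; exact hp s
  · rw [← hs]; exact hq s

lemma symm_mem {U : Set X} {a b : X} {p : Path a b} (hp : ∀ t, p t ∈ U) :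
    ∀ t, p.symm t ∈ U := fun t => hp (unitInterval.symm t)

/-- The subgroup of homotopy classes of loops lying inside `U`. -/
def loopsIn (x₀ : X) (U : Set X) (hU : x₀ ∈ U) : Subgroup (FundamentalGroup X x₀) where
  carrier := {g | ∃ γ : Path x₀ x₀, (∀ t, γ t ∈ U) ∧ loopClass γ = g}
  one_mem' := ⟨Path.refl x₀, fun _ => hU, loopClass_refl x₀⟩
  mul_mem' := by
    rintro g g' ⟨γ, hγ, rfl⟩ ⟨γ', hγ', rfl⟩
    exact ⟨γ'.trans γ, trans_mem hγ' hγ, loopClass_trans γ' γ⟩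
  inv_mem' := by
    rintro g ⟨γ, hγ, rfl⟩
    exact ⟨γ.symm, symm_mem hγ, loopClass_symm γ⟩

end Aux

theorem smallLoopSet_eq_spanier_of_strongHSLT
    [LocallyPathConnectedSpace X] {x₀ : X} (H : Subgroup (FundamentalGroup X x₀))
    (hH : (H : Set (FundamentalGroup X x₀)) ⊆ smallLoopSet x₀)
    (hSLT : StrongHSLTAt x₀ H) :
    smallLoopSet x₀ = (spanierWhole x₀ : Set (FundamentalGroup X x₀)) := by
  ext g
  constructor
  · intro hg
    rw [SetLike.mem_coe, spanierWhole, Subgroup.mem_iInf]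
    intro 𝒰
    rw [Subgroup.mem_iInf]
    intro h𝒰
    have hx : x₀ ∈ ⋃₀ 𝒰 := h𝒰.2 ▸ Set.mem_univ x₀
    obtain ⟨U, hU𝒰, hxU⟩ := hx
    obtain ⟨γ, hγ, hγcl⟩ := hg U (h𝒰.1 U hU𝒰) hxU
    apply Subgroup.subset_closure
    exact ⟨x₀, Path.refl x₀, γ, U, hU𝒰, hγ, by rw [loopClass_refl_conj, hγcl]⟩
  · intro hg U hUopen hUx
    choose V hVopen hVx hVprop using fun x => hSLT x U hUopen hUx
    set W : X → Set X := fun x => pathComponentIn (V x) x with hW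
    have hcover : IsOpenCover (Set.range W) := by
      constructor
      · rintro _ ⟨x, rfl⟩
        exact (hVopen x).pathComponentIn x
      · apply Set.eq_univ_of_forall
        intro z
        exact ⟨W z, ⟨z, rfl⟩, mem_pathComponentIn_self (hVx z)⟩
    have hmem : g ∈ spanierGroupAt x₀ (Set.range W) := by
      rw [SetLike.mem_coe, spanierWhole, Subgroup.mem_iInf] at hg
      have := hg (Set.range W)
      rw [Subgroup.mem_iInf] at this
      exact this hcover
    suffices hle : spanierGroupAt x₀ (Set.range W) ≤ loopsIn x₀ U hUx by
      obtain ⟨γ, hγ, hγcl⟩ := hle hmem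
      exact ⟨γ, hγ, hγcl⟩
    rw [spanierGroupAt, Subgroup.closure_le]
    rintro g' ⟨y, α, β, Uset, ⟨x, rfl⟩, hβ, rfl⟩
    have hy : y ∈ pathComponentIn (V x) x := by
      have h0 := hβ 0
      rwa [β.source] at h0
    obtain ⟨δ, hδ⟩ := (isPathConnected_pathComponentIn (hVx x)).joinedIn x
      (mem_pathComponentIn_self (hVx x)) y hy
    have hδV : ∀ t, δ t ∈ V x := fun t => pathComponentIn_subset (hδ t)
    have hβV : ∀ t, β t ∈ V x := fun t => pathComponentIn_subset (hβ t)
    set β' : Path x x := δ.trans (β.trans δ.symm) with hβ'def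
    have hβ'V : ∀ t, β' t ∈ V x := trans_mem hδV (trans_mem hβV (symm_mem hδV))
    obtain ⟨lam, hlam, hmemH⟩ := hVprop x β' hβ'V (α.trans δ.symm)
    obtain ⟨μ, hμ, hμcl⟩ := hH hmemH U hUopen hUx
    refine ⟨lam.trans μ, trans_mem hlam hμ, ?_⟩
    rw [loopClass_trans, hμcl, inv_mul_cancel_right, ← loopClass_conj α δ β]


end
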